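/- Let X and Y be Polish spaces, μ a Borel probability measure on X, ν a Borel probability measure on Y, and c : X × Y → [0, +∞) a lower semicontinuous cost function. Assume there exist nonnegative measurable functions c_X ∈ L¹(μ) and c_Y ∈ L¹(ν) such that c(x,y) ≤ c_X(x) + c_Y(y) for all (x,y) ∈ X × Y. Then the supremum of J(φ,ψ) = ∫_X φ dμ + ∫_Y ψ dν, over all pairs (φ,ψ) with φ ∈ L¹(μ), ψ ∈ L¹(ν) and φ(x) + ψ(y) ≤ c(x,y) for μ-almost every x and ν-almost every y, is attained by some admissible pair (φ*, ψ*). -/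

import Mathlib

open MeasureTheory Filter Topology ENNReal

namespace KantorovichAux

variable {α : Type*} [MeasurableSpace α]

lemma supLimit {μ : Measure α} {f : ℕ → α → ℝ} {K : ℝ}
    (hf : ∀ n, Integrable (f n) μ)
    (hmono : ∀ᵐ x ∂μ, Monotone fun n => f n x)
    (hK : ∀ n, ∫ x, f n x ∂μ ≤ K) :
    ∃ F : α → ℝ, Integrable F μ ∧
      (∀ᵐ x ∂μ, Tendsto (fun n => f n x) atTop (𝓝 (F x))) ∧
      (∀ᵐ x ∂μ, ∀ n, f n x ≤ F x) ∧
      Tendsto (fun n => ∫ x, f n x ∂μ) atTop (𝓝 (∫ x, F x ∂μ)) := by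
  set g : ℕ → α → ℝ≥0∞ := fun n x => ENNReal.ofReal (f n x - f 0 x) with hgdef
  have hgm : ∀ n, AEMeasurable (g n) μ := fun n =>
    ((hf n).sub (hf 0)).aemeasurable.ennreal_ofReal
  have hgmono : ∀ᵐ x ∂μ, Monotone fun n => g n x := by
    filter_upwards [hmono] with x hx n m hnm
    exact ENNReal.ofReal_le_ofReal (by have := hx hnm; simp only at this ⊢; linarith)
  have hglin : ∀ n, ∫⁻ x, g n x ∂μ = ENNReal.ofReal (∫ x, (f n x - f 0 x) ∂μ) := by
    intro n
    rw [← ofReal_integral_eq_lintegral_ofReal (f := fun x => f n x - f 0 x)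
      ((hf n).sub (hf 0)) ?_]
    filter_upwards [hmono] with x hx
    simp only [Pi.zero_apply, sub_nonneg]
    exact hx (Nat.zero_le n)
  set G : α → ℝ≥0∞ := fun x => ⨆ n, g n x with hGdef
  have hGm : AEMeasurable G μ := AEMeasurable.iSup hgm
  have hGlint : ∫⁻ x, G x ∂μ ≤ ENNReal.ofReal (K - ∫ x, f 0 x ∂μ) := by
    rw [hGdef, lintegral_iSup' hgm hgmono]
    refine iSup_le fun n => ?_
    rw [hglin n, integral_sub (hf n) (hf 0)]
    exact ENNReal.ofReal_le_ofReal (by linarith [hK n])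
  have hGfin : ∀ᵐ x ∂μ, G x < ∞ :=
    ae_lt_top' hGm (lt_of_le_of_lt hGlint ENNReal.ofReal_lt_top).ne
  have hGint : Integrable (fun x => (G x).toReal) μ :=
    integrable_toReal_of_lintegral_ne_top hGm
      (lt_of_le_of_lt hGlint ENNReal.ofReal_lt_top).ne
  have htend : ∀ᵐ x ∂μ, Tendsto (fun n => f n x) atTop (𝓝 (f 0 x + (G x).toReal)) := by
    filter_upwards [hmono, hGfin] with x hx hGx
    have h1 : Tendsto (fun n => g n x) atTop (𝓝 (G x)) := by
      refine tendsto_atTop_iSup ?_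
      intro n m hnm
      exact ENNReal.ofReal_le_ofReal (by have := hx hnm; simp only at this ⊢; linarith)
    have h2 : Tendsto (fun n => (g n x).toReal) atTop (𝓝 (G x).toReal) :=
      (ENNReal.tendsto_toReal hGx.ne).comp h1
    have h3 : ∀ n, (g n x).toReal = f n x - f 0 x := fun n =>
      ENNReal.toReal_ofReal (by have := hx (Nat.zero_le n); simp only at this; linarith)
    simp only [h3] at h2
    have := h2.const_add (f 0 x)
    simpa using this.congr (fun n => by ring)
  refine ⟨fun x => f 0 x + (G x).toReal, (hf 0).add hGint, htend, ?_, ?_⟩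
  · filter_upwards [hmono, htend] with x hx hxt
    intro n
    exact hx.ge_of_tendsto hxt n
  · exact integral_tendsto_of_tendsto_of_monotone hf ((hf 0).add hGint) hmono htend

lemma infLimit {μ : Measure α} {f : ℕ → α → ℝ} {K : ℝ}
    (hf : ∀ n, Integrable (f n) μ)
    (hanti : ∀ᵐ x ∂μ, Antitone fun n => f n x)
    (hK : ∀ n, K ≤ ∫ x, f n x ∂μ) :
    ∃ F : α → ℝ, Integrable F μ ∧
      (∀ᵐ x ∂μ, Tendsto (fun n => f n x) atTop (𝓝 (F x))) ∧
      (∀ᵐ x ∂μ, ∀ n, F x ≤ f n x) ∧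
      Tendsto (fun n => ∫ x, f n x ∂μ) atTop (𝓝 (∫ x, F x ∂μ)) := by
  obtain ⟨F₀, hint, htend, hle, hti⟩ :=
    supLimit (f := fun n x => -f n x) (K := -K) (fun n => (hf n).neg)
      (by filter_upwards [hanti] with x hx n m hnm; simpa using hx hnm)
      (fun n => by rw [integral_neg]; linarith [hK n])
  refine ⟨fun x => -F₀ x, hint.neg, ?_, ?_, ?_⟩
  · filter_upwards [htend] with x hx
    simpa using hx.neg
  · filter_upwards [hle] with x hx n
    have := hx n; linarith
  · have h2 := hti.neg
    simp only [integral_neg, neg_neg] at h2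
    simpa [integral_neg] using h2

end KantorovichAux

open KantorovichAux

/-- **Attainment of the Kantorovich dual supremum.** -/
theorem kantorovich_dual_attained
    {X Y : Type*} [TopologicalSpace X] [PolishSpace X] [MeasurableSpace X] [BorelSpace X]
    [TopologicalSpace Y] [PolishSpace Y] [MeasurableSpace Y] [BorelSpace Y]
    (μ : Measure X) (ν : Measure Y) [IsProbabilityMeasure μ] [IsProbabilityMeasure ν]
    (c : X × Y → ℝ) (hc0 : ∀ p, 0 ≤ c p) (hc : LowerSemicontinuous c)
    (cX : X → ℝ) (cY : Y → ℝ)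
    (hcX0 : ∀ x, 0 ≤ cX x) (hcY0 : ∀ y, 0 ≤ cY y)
    (hcXm : Measurable cX) (hcYm : Measurable cY)
    (hcXi : Integrable cX μ) (hcYi : Integrable cY ν)
    (hdom : ∀ x y, c (x, y) ≤ cX x + cY y) :
    ∃ (φ : X → ℝ) (ψ : Y → ℝ), Integrable φ μ ∧ Integrable ψ ν ∧
      (∀ᵐ x ∂μ, ∀ᵐ y ∂ν, φ x + ψ y ≤ c (x, y)) ∧
      ∀ (φ' : X → ℝ) (ψ' : Y → ℝ), Integrable φ' μ → Integrable ψ' ν →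
        (∀ᵐ x ∂μ, ∀ᵐ y ∂ν, φ' x + ψ' y ≤ c (x, y)) →
        ∫ x, φ' x ∂μ + ∫ y, ψ' y ∂ν ≤ ∫ x, φ x ∂μ + ∫ y, ψ y ∂ν := by
  classical
  set S : Set ℝ := {r | ∃ φ ψ, Integrable φ μ ∧ Integrable ψ ν ∧
      (∀ᵐ x ∂μ, ∀ᵐ y ∂ν, φ x + ψ y ≤ c (x, y)) ∧ r = ∫ x, φ x ∂μ + ∫ y, ψ y ∂ν}
    with hSdef
  set IY : ℝ := ∫ y, cY y ∂ν with hIY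
  set IX : ℝ := ∫ x, cX x ∂μ with hIX
  -- a pointwise (in x) bound for admissible pairs
  have key : ∀ (φ : X → ℝ) (ψ : Y → ℝ), Integrable ψ ν →
      (∀ᵐ x ∂μ, ∀ᵐ y ∂ν, φ x + ψ y ≤ c (x, y)) →
      ∀ᵐ x ∂μ, φ x + ∫ y, ψ y ∂ν ≤ cX x + IY := by
    intro φ ψ hψ h
    filter_upwards [h] with x hx
    have h1 : ∀ᵐ y ∂ν, φ x + ψ y ≤ cX x + cY y := by
      filter_upwards [hx] with y hy
      exact hy.trans (hdom x y)
    have h2 := integral_mono_ae (f := fun y => φ x + ψ y) (g := fun y => cX x + cY y) ((integrable_const (φ x)).add hψ) ((integrable_const (cX x)).add hcYi) h1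
    rw [integral_add (integrable_const _) hψ, integral_add (integrable_const _) hcYi] at h2
    simpa using h2
  -- S is bounded above
  have hSbdd : BddAbove S := by
    refine ⟨IX + IY, fun r hr => ?_⟩
    obtain ⟨φ, ψ, hφ, hψ, hadm, rfl⟩ := hr
    have h1 := key φ ψ hψ hadm
    have h2 := integral_mono_ae (f := fun x => φ x + ∫ y, ψ y ∂ν) (g := fun x => cX x + IY) (hφ.add (integrable_const (∫ y, ψ y ∂ν))) (hcXi.add (integrable_const IY)) h1
    rw [integral_add hφ (integrable_const _), integral_add hcXi (integrable_const _)] at h2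
    simpa using h2
  have hS0 : (0 : ℝ) ∈ S := by
    refine ⟨0, 0, integrable_zero _ _ _, integrable_zero _ _ _, ?_, by simp⟩
    exact ae_of_all _ fun x => ae_of_all _ fun y => by simpa using hc0 (x, y)
  have hSne : S.Nonempty := ⟨0, hS0⟩
  set s : ℝ := sSup S with hs
  have hmemle : ∀ r ∈ S, r ≤ s := fun r hr => le_csSup hSbdd hr
  -- select a normalized maximizing sequence
  have hsel : ∀ n : ℕ, ∃ q : (X → ℝ) × (Y → ℝ), Integrable q.1 μ ∧ Integrable q.2 ν ∧
      (∀ᵐ x ∂μ, ∀ᵐ y ∂ν, q.1 x + q.2 y ≤ c (x, y)) ∧ (∫ y, q.2 y ∂ν = 0) ∧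
      s - (1 / 2 : ℝ) ^ n < ∫ x, q.1 x ∂μ + ∫ y, q.2 y ∂ν := by
    intro n
    have hpos : (0 : ℝ) < (1 / 2 : ℝ) ^ n := by positivity
    obtain ⟨r, hrS, hr⟩ := exists_lt_of_lt_csSup hSne (by linarith : s - (1 / 2 : ℝ) ^ n < s)
    obtain ⟨f, g, hfi, hgi, hfg, rfl⟩ := hrS
    refine ⟨⟨fun x => f x + ∫ y, g y ∂ν, fun y => g y - ∫ y, g y ∂ν⟩,
      hfi.add (integrable_const _), hgi.sub (integrable_const _), ?_, ?_, ?_⟩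
    · filter_upwards [hfg] with x hx
      filter_upwards [hx] with y hy
      show f x + (∫ z, g z ∂ν) + (g y - ∫ z, g z ∂ν) ≤ c (x, y)
      linarith
    · have h0 : ∫ y, (g y - ∫ z, g z ∂ν) ∂ν = 0 := by
        rw [integral_sub hgi (integrable_const _), integral_const, probReal_univ,
          one_smul, sub_self]
      exact h0
    · rw [integral_add hfi (integrable_const _), integral_sub hgi (integrable_const _)]
      simp only [integral_const, probReal_univ, one_smul]
      linarith
  choose q hq1 hq2 hq3 hq4 hq5 using hsel
  set φ0 : ℕ → X → ℝ := fun n => (q n).1 with hφ0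
  set ψ0 : ℕ → Y → ℝ := fun n => (q n).2 with hψ0
  -- upper envelope for the φ's
  have hub : ∀ᵐ x ∂μ, ∀ n, φ0 n x ≤ cX x + IY := by
    rw [ae_all_iff]
    intro n
    filter_upwards [key (φ0 n) (ψ0 n) (hq2 n) (hq3 n)] with x hx
    rw [hq4 n] at hx
    linarith
  -- admissibility of lattice combinations
  have hadm_max : ∀ (f1 f2 : X → ℝ) (g1 g2 : Y → ℝ),
      (∀ᵐ x ∂μ, ∀ᵐ y ∂ν, f1 x + g1 y ≤ c (x, y)) →
      (∀ᵐ x ∂μ, ∀ᵐ y ∂ν, f2 x + g2 y ≤ c (x, y)) →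
      ∀ᵐ x ∂μ, ∀ᵐ y ∂ν, max (f1 x) (f2 x) + min (g1 y) (g2 y) ≤ c (x, y) := by
    intro f1 f2 g1 g2 h1 h2
    filter_upwards [h1, h2] with x hx1 hx2
    filter_upwards [hx1, hx2] with y hy1 hy2
    rcases max_cases (f1 x) (f2 x) with ⟨h, _⟩ | ⟨h, _⟩ <;> rw [h]
    · linarith [min_le_left (g1 y) (g2 y)]
    · linarith [min_le_right (g1 y) (g2 y)]
  have hadm_min : ∀ (f1 f2 : X → ℝ) (g1 g2 : Y → ℝ),
      (∀ᵐ x ∂μ, ∀ᵐ y ∂ν, f1 x + g1 y ≤ c (x, y)) →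
      (∀ᵐ x ∂μ, ∀ᵐ y ∂ν, f2 x + g2 y ≤ c (x, y)) →
      ∀ᵐ x ∂μ, ∀ᵐ y ∂ν, min (f1 x) (f2 x) + max (g1 y) (g2 y) ≤ c (x, y) := by
    intro f1 f2 g1 g2 h1 h2
    filter_upwards [h1, h2] with x hx1 hx2
    filter_upwards [hx1, hx2] with y hy1 hy2
    rcases max_cases (g1 y) (g2 y) with ⟨h, _⟩ | ⟨h, _⟩ <;> rw [h]
    · linarith [min_le_left (f1 x) (f2 x)]
    · linarith [min_le_right (f1 x) (f2 x)]
  -- the key lattice value inequality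
  have hval : ∀ (f1 f2 : X → ℝ) (g1 g2 : Y → ℝ), Integrable f1 μ → Integrable f2 μ →
      Integrable g1 ν → Integrable g2 ν →
      (∀ᵐ x ∂μ, ∀ᵐ y ∂ν, f1 x + g1 y ≤ c (x, y)) →
      (∀ᵐ x ∂μ, ∀ᵐ y ∂ν, f2 x + g2 y ≤ c (x, y)) →
      (∫ x, f1 x ∂μ + ∫ y, g1 y ∂ν) + (∫ x, f2 x ∂μ + ∫ y, g2 y ∂ν) - s ≤
        ∫ x, max (f1 x) (f2 x) ∂μ + ∫ y, min (g1 y) (g2 y) ∂ν := by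
    intro f1 f2 g1 g2 hf1 hf2 hg1 hg2 h1 h2
    have hfmax : Integrable (fun x => max (f1 x) (f2 x)) μ := by exact hf1.sup hf2
    have hfmin : Integrable (fun x => min (f1 x) (f2 x)) μ := by exact hf1.inf hf2
    have hgmax : Integrable (fun y => max (g1 y) (g2 y)) ν := by exact hg1.sup hg2
    have hgmin : Integrable (fun y => min (g1 y) (g2 y)) ν := by exact hg1.inf hg2
    have hfid : ∫ x, max (f1 x) (f2 x) ∂μ + ∫ x, min (f1 x) (f2 x) ∂μ
        = ∫ x, f1 x ∂μ + ∫ x, f2 x ∂μ := by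
      rw [← integral_add hfmax hfmin, ← integral_add hf1 hf2]
      exact integral_congr_ae (ae_of_all _ fun x => max_add_min _ _)
    have hgid : ∫ y, max (g1 y) (g2 y) ∂ν + ∫ y, min (g1 y) (g2 y) ∂ν
        = ∫ y, g1 y ∂ν + ∫ y, g2 y ∂ν := by
      rw [← integral_add hgmax hgmin, ← integral_add hg1 hg2]
      exact integral_congr_ae (ae_of_all _ fun y => max_add_min _ _)
    have hmm : ∫ x, min (f1 x) (f2 x) ∂μ + ∫ y, max (g1 y) (g2 y) ∂ν ≤ s :=
      hmemle _ ⟨_, _, hfmin, hgmax, hadm_min f1 f2 g1 g2 h1 h2, rfl⟩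
    linarith
  -- iterated maxima / minima
  set a : ℕ → ℕ → X → ℝ :=
    fun n k => Nat.rec (φ0 n) (fun k ak x => max (ak x) (φ0 (n + k + 1) x)) k with hadef
  set b : ℕ → ℕ → Y → ℝ :=
    fun n k => Nat.rec (ψ0 n) (fun k bk y => min (bk y) (ψ0 (n + k + 1) y)) k with hbdef
  have ha0 : ∀ n, a n 0 = φ0 n := fun n => rfl
  have haS : ∀ n k, a n (k + 1) = fun x => max (a n k x) (φ0 (n + k + 1) x) := fun n k => rfl
  have hb0 : ∀ n, b n 0 = ψ0 n := fun n => rfl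
  have hbS : ∀ n k, b n (k + 1) = fun y => min (b n k y) (ψ0 (n + k + 1) y) := fun n k => rfl
  -- the inductive package
  have hpack : ∀ n k, Integrable (a n k) μ ∧ Integrable (b n k) ν ∧
      (∀ᵐ x ∂μ, ∀ᵐ y ∂ν, a n k x + b n k y ≤ c (x, y)) ∧
      s - (1 / 2 : ℝ) ^ n * (2 - (1 / 2) ^ k) ≤ ∫ x, a n k x ∂μ + ∫ y, b n k y ∂ν := by
    intro n k
    induction k with
    | zero =>
      refine ⟨hq1 n, hq2 n, hq3 n, ?_⟩
      have h5 := hq5 n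
      have he : s - (1 / 2 : ℝ) ^ n * (2 - (1 / 2 : ℝ) ^ 0) = s - (1 / 2) ^ n := by norm_num
      rw [he, ha0, hb0]
      linarith
    | succ k ih =>
      obtain ⟨hai, hbi, hadm, hJ⟩ := ih
      have hai' : Integrable (a n (k + 1)) μ := by
        rw [haS]
        exact hai.sup (hq1 (n + k + 1))
      have hbi' : Integrable (b n (k + 1)) ν := by
        rw [hbS]
        exact hbi.inf (hq2 (n + k + 1))
      have hadm' := hadm_max (a n k) (φ0 (n + k + 1)) (b n k) (ψ0 (n + k + 1)) hadm
        (hq3 (n + k + 1))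
      have hv := hval (a n k) (φ0 (n + k + 1)) (b n k) (ψ0 (n + k + 1)) hai (hq1 (n + k + 1))
        hbi (hq2 (n + k + 1)) hadm (hq3 (n + k + 1))
      refine ⟨hai', hbi', by rw [haS, hbS]; exact hadm', ?_⟩
      have hgoal : ∫ x, a n (k + 1) x ∂μ + ∫ y, b n (k + 1) y ∂ν
          = ∫ x, max (a n k x) (φ0 (n + k + 1) x) ∂μ
            + ∫ y, min (b n k y) (ψ0 (n + k + 1) y) ∂ν := by rw [haS, hbS]
      have h4 : ∫ y, ψ0 (n + k + 1) y ∂ν = 0 := hq4 (n + k + 1)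
      have h5' : s - (1 / 2 : ℝ) ^ n * ((1 / 2) ^ k * (1 / 2)) <
          ∫ x, φ0 (n + k + 1) x ∂μ + ∫ y, ψ0 (n + k + 1) y ∂ν := by
        have hpow : (1 / 2 : ℝ) ^ (n + k + 1) = (1 / 2) ^ n * ((1 / 2) ^ k * (1 / 2)) := by ring
        have h5'' := hq5 (n + k + 1)
        rw [hpow] at h5''
        exact h5''
      have hexpand : (1 / 2 : ℝ) ^ n * (2 - (1 / 2) ^ k * (1 / 2)) =
          (1 / 2 : ℝ) ^ n * (2 - (1 / 2) ^ k) + (1 / 2) ^ n * ((1 / 2) ^ k * (1 / 2)) := by ring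
      rw [hgoal, pow_succ]
      linarith [hv, hJ, h5', h4, hexpand]
  -- pointwise facts about a and b
  have hb_le : ∀ n k y, b n k y ≤ ψ0 n y := by
    intro n k
    induction k with
    | zero => intro y; simp [hb0]
    | succ k ih => intro y; rw [hbS]; exact (min_le_left _ _).trans (ih y)
  have ha_mono : ∀ n x, Monotone fun k => a n k x := by
    intro n x
    apply monotone_nat_of_le_succ
    intro k
    rw [haS]
    exact le_max_left _ _
  have hb_anti : ∀ n y, Antitone fun k => b n k y := by
    intro n y
    apply antitone_nat_of_succ_le
    intro k
    rw [hbS]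
    exact min_le_left _ _
  have ha_ub : ∀ n k, ∀ᵐ x ∂μ, a n k x ≤ cX x + IY := by
    intro n k
    induction k with
    | zero => filter_upwards [hub] with x hx; simpa [ha0] using hx n
    | succ k ih =>
      filter_upwards [ih, hub] with x hx1 hx2
      rw [haS]
      exact max_le hx1 (hx2 (n + k + 1))
  have haint_ub : ∀ n k, ∫ x, a n k x ∂μ ≤ IX + IY := by
    intro n k
    have := integral_mono_ae (f := a n k) (g := fun x => cX x + IY) (hpack n k).1 (hcXi.add (integrable_const IY)) (ha_ub n k)
    rw [integral_add hcXi (integrable_const _)] at this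
    simpa using this
  have hbint_ub : ∀ n k, ∫ y, b n k y ∂ν ≤ 0 := by
    intro n k
    have := integral_mono (hpack n k).2.1 (hq2 n) (fun y => hb_le n k y)
    rw [hq4 n] at this
    exact this
  have hbint_lb : ∀ n k, s - 2 - (IX + IY) ≤ ∫ y, b n k y ∂ν := by
    intro n k
    have h1 := (hpack n k).2.2.2
    have h2 := haint_ub n k
    have h3 : (1 / 2 : ℝ) ^ n * (2 - (1 / 2) ^ k) ≤ 2 := by
      have hn : (0 : ℝ) < (1 / 2 : ℝ) ^ n := by positivity
      have hn1 : (1 / 2 : ℝ) ^ n ≤ 1 := pow_le_one₀ (by norm_num) (by norm_num)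
      have hk : (0 : ℝ) < (1 / 2 : ℝ) ^ k := by positivity
      nlinarith
    linarith
  -- stage B : limits in k
  have hΦex : ∀ n, ∃ F : X → ℝ, Integrable F μ ∧
      (∀ᵐ x ∂μ, Tendsto (fun k => a n k x) atTop (𝓝 (F x))) ∧
      (∀ᵐ x ∂μ, ∀ k, a n k x ≤ F x) ∧
      Tendsto (fun k => ∫ x, a n k x ∂μ) atTop (𝓝 (∫ x, F x ∂μ)) := by
    intro n
    exact supLimit (fun k => (hpack n k).1) (ae_of_all _ fun x => ha_mono n x)
      (haint_ub n)
  have hΨex : ∀ n, ∃ F : Y → ℝ, Integrable F ν ∧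
      (∀ᵐ y ∂ν, Tendsto (fun k => b n k y) atTop (𝓝 (F y))) ∧
      (∀ᵐ y ∂ν, ∀ k, F y ≤ b n k y) ∧
      Tendsto (fun k => ∫ y, b n k y ∂ν) atTop (𝓝 (∫ y, F y ∂ν)) := by
    intro n
    exact infLimit (fun k => (hpack n k).2.1) (ae_of_all _ fun y => hb_anti n y)
      (hbint_lb n)
  choose Φ hΦint hΦtend hΦge hΦti using hΦex
  choose Ψ hΨint hΨtend hΨle hΨti using hΨex
  -- value bound for (Φ n, Ψ n)
  have hJn : ∀ n, s - 2 * (1 / 2 : ℝ) ^ n ≤ ∫ x, Φ n x ∂μ + ∫ y, Ψ n y ∂ν := by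
    intro n
    refine ge_of_tendsto ((hΦti n).add (hΨti n)) (Eventually.of_forall fun k => ?_)
    have h1 := (hpack n k).2.2.2
    have hk : (0 : ℝ) < (1 / 2 : ℝ) ^ k := by positivity
    have hn : (0 : ℝ) < (1 / 2 : ℝ) ^ n := by positivity
    nlinarith
  -- admissibility of (Φ n, Ψ n)
  have hadmn : ∀ n, ∀ᵐ x ∂μ, ∀ᵐ y ∂ν, Φ n x + Ψ n y ≤ c (x, y) := by
    intro n
    have hswap : ∀ᵐ x ∂μ, ∀ k, ∀ᵐ y ∂ν, a n k x + b n k y ≤ c (x, y) :=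
      (ae_all_iff).2 fun k => (hpack n k).2.2.1
    filter_upwards [hswap, hΦtend n] with x hx hxt
    have hy' : ∀ᵐ y ∂ν, ∀ k, a n k x + b n k y ≤ c (x, y) := (ae_all_iff).2 hx
    filter_upwards [hy', hΨtend n] with y hy hyt
    exact le_of_tendsto (hxt.add hyt) (Eventually.of_forall hy)
  -- integral bounds for Φ n, Ψ n
  have hΨint_le : ∀ n, ∫ y, Ψ n y ∂ν ≤ (0 : ℝ) := fun n =>
    le_of_tendsto (hΨti n) (Eventually.of_forall fun k => hbint_ub n k)
  have hΦint_lb : ∀ n, s - 2 ≤ ∫ x, Φ n x ∂μ := by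
    intro n
    have h1 := hJn n
    have h2 := hΨint_le n
    have hn1 : (1 / 2 : ℝ) ^ n ≤ 1 := pow_le_one₀ (by norm_num) (by norm_num)
    linarith
  -- monotonicity in n
  have ha_shift : ∀ n k x, a (n + 1) k x ≤ a n (k + 1) x := by
    intro n k
    induction k with
    | zero =>
      intro x
      rw [haS, ha0, ha0]
      exact le_max_right _ _
    | succ k ih =>
      intro x
      have hidx : n + 1 + k + 1 = n + (k + 1) + 1 := by omega
      have h1 : a (n + 1) (k + 1) x = max (a (n + 1) k x) (φ0 (n + 1 + k + 1) x) := rfl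
      have h2 : a n (k + 1 + 1) x = max (a n (k + 1) x) (φ0 (n + (k + 1) + 1) x) := rfl
      rw [h1, h2, hidx]
      exact max_le_max (ih x) le_rfl
  have hb_shift : ∀ n k y, b n (k + 1) y ≤ b (n + 1) k y := by
    intro n k
    induction k with
    | zero =>
      intro y
      rw [hbS, hb0, hb0]
      exact min_le_right _ _
    | succ k ih =>
      intro y
      have hidx : n + 1 + k + 1 = n + (k + 1) + 1 := by omega
      have h1 : b n (k + 1 + 1) y = min (b n (k + 1) y) (ψ0 (n + (k + 1) + 1) y) := rfl
      have h2 : b (n + 1) (k + 1) y = min (b (n + 1) k y) (ψ0 (n + 1 + k + 1) y) := rfl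
      rw [h1, h2, hidx]
      exact min_le_min (ih y) le_rfl
  have hΦanti : ∀ᵐ x ∂μ, Antitone fun n => Φ n x := by
    have hstep : ∀ n, ∀ᵐ x ∂μ, Φ (n + 1) x ≤ Φ n x := by
      intro n
      filter_upwards [hΦtend (n + 1), hΦtend n] with x h1 h2
      have h2' : Tendsto (fun k => a n (k + 1) x) atTop (𝓝 (Φ n x)) :=
        h2.comp (tendsto_add_atTop_nat 1)
      exact le_of_tendsto_of_tendsto' h1 h2' fun k => ha_shift n k x
    filter_upwards [(ae_all_iff).2 hstep] with x hx
    exact antitone_nat_of_succ_le hx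
  have hΨmono : ∀ᵐ y ∂ν, Monotone fun n => Ψ n y := by
    have hstep : ∀ n, ∀ᵐ y ∂ν, Ψ n y ≤ Ψ (n + 1) y := by
      intro n
      filter_upwards [hΨtend (n + 1), hΨtend n] with y h1 h2
      have h2' : Tendsto (fun k => b n (k + 1) y) atTop (𝓝 (Ψ n y)) :=
        h2.comp (tendsto_add_atTop_nat 1)
      exact le_of_tendsto_of_tendsto' h2' h1 fun k => hb_shift n k y
    filter_upwards [(ae_all_iff).2 hstep] with y hy
    exact monotone_nat_of_le_succ hy
  -- stage C : limits in n
  obtain ⟨Phi, hPhiint, hPhitend, hPhile, hPhiti⟩ :=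
    infLimit (f := fun n => Φ n) (K := s - 2) hΦint hΦanti hΦint_lb
  obtain ⟨Psi, hPsiint, hPsitend, hPsige, hPsiti⟩ :=
    supLimit (f := fun n => Ψ n) (K := 0) hΨint hΨmono hΨint_le
  -- the value of the limit pair is at least s
  have hfinal : s ≤ ∫ x, Phi x ∂μ + ∫ y, Psi y ∂ν := by
    have hlow : Tendsto (fun n : ℕ => s - 2 * (1 / 2 : ℝ) ^ n) atTop (𝓝 s) := by
      have h0 : Tendsto (fun n : ℕ => (1 / 2 : ℝ) ^ n) atTop (𝓝 0) :=
        tendsto_pow_atTop_nhds_zero_of_lt_one (by norm_num) (by norm_num)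
      have h1 : Tendsto (fun n : ℕ => s - 2 * (1 / 2 : ℝ) ^ n) atTop (𝓝 (s - 2 * 0)) :=
        tendsto_const_nhds.sub (h0.const_mul 2)
      simpa using h1
    exact le_of_tendsto_of_tendsto' hlow ((hPhiti).add (hPsiti)) hJn
  -- admissibility of the limit pair
  have hadmInf : ∀ᵐ x ∂μ, ∀ᵐ y ∂ν, Phi x + Psi y ≤ c (x, y) := by
    have hswap : ∀ᵐ x ∂μ, ∀ n, ∀ᵐ y ∂ν, Φ n x + Ψ n y ≤ c (x, y) :=
      (ae_all_iff).2 hadmn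
    filter_upwards [hswap, hPhile] with x hx hxle
    have hy' : ∀ᵐ y ∂ν, ∀ n, Φ n x + Ψ n y ≤ c (x, y) := (ae_all_iff).2 hx
    filter_upwards [hy', hPsitend] with y hy hyt
    refine le_of_tendsto (tendsto_const_nhds.add hyt) (Eventually.of_forall fun n => ?_)
    calc Phi x + Ψ n y ≤ Φ n x + Ψ n y := by linarith [hxle n]
      _ ≤ c (x, y) := hy n
  refine ⟨Phi, Psi, hPhiint, hPsiint, hadmInf, ?_⟩
  intro φ' ψ' h1 h2 h3
  exact (hmemle _ ⟨φ', ψ', h1, h2, h3, rfl⟩).trans hfinal
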